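/- Let Γ, Θ > 0 and N_d, Ṅ_d : ℝ → ℝ bounded with Γ ≥ ‖N_d‖_∞ + ‖Ṅ_d‖_∞. Then for every real e and every t, e·(N_d(t) - Ṅ_d(t)) - Γ·e·tanh(Θ·e) ≤ Γ·|e|·(1 - tanh(Θ·|e|)) ≤ (Γ/Θ)·c, where c = 0.2785. -/

import Mathlib

lemma exp_12784_bounds : (3.5908 : ℝ) ≤ Real.exp 1.2784 ∧ Real.exp 1.2784 ≤ 3.5909 := by
  have hx : |(0.2784 : ℝ)| ≤ 1 := by rw [abs_of_nonneg] <;> norm_num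
  have h5 : (0:ℕ) < 5 := by norm_num
  have hb := Real.exp_bound hx h5
  have hsum : ∑ m ∈ Finset.range 5, (0.2784:ℝ) ^ m / m.factorial
      = 1 + 0.2784 + 0.2784^2/2 + 0.2784^3/6 + 0.2784^4/24 := by
    simp [Finset.sum_range_succ, Nat.factorial]
  rw [hsum] at hb
  have habs : |(0.2784:ℝ)| ^ 5 = (0.2784:ℝ)^5 := by
    rw [abs_of_nonneg]; norm_num
  rw [habs] at hb
  have hb' := abs_sub_le_iff.1 hb
  have hlow : (1.320983 : ℝ) ≤ Real.exp 0.2784 := by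
    have := hb'.2
    norm_num [Nat.factorial] at this ⊢
    nlinarith [this]
  have hhigh : Real.exp 0.2784 ≤ (1.321017 : ℝ) := by
    have := hb'.1
    norm_num [Nat.factorial] at this ⊢
    nlinarith [this]
  have he1l := Real.exp_one_gt_d9.le
  have he1h := Real.exp_one_lt_d9.le
  have hsplit : Real.exp 1.2784 = Real.exp 1 * Real.exp 0.2784 := by
    rw [← Real.exp_add]; norm_num
  constructor
  · rw [hsplit]
    calc (3.5908:ℝ) ≤ 2.7182818283 * 1.320983 := by norm_num
      _ ≤ Real.exp 1 * Real.exp 0.2784 :=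
        mul_le_mul he1l hlow (by norm_num) (Real.exp_pos 1).le
  · rw [hsplit]
    calc Real.exp 1 * Real.exp 0.2784 ≤ 2.7182818286 * 1.321017 :=
        mul_le_mul he1h hhigh (Real.exp_pos _).le (by norm_num)
      _ ≤ 3.5909 := by norm_num

lemma key_u (u : ℝ) (hu : 0 ≤ u) : u ≤ 0.2785 * (Real.exp u + 1) := by
  obtain ⟨hEl, hEh⟩ := exp_12784_bounds
  have h1 : Real.exp u = Real.exp 1.2784 * Real.exp (u - 1.2784) := by
    rw [← Real.exp_add]; ring_nf
  have h2 : u - 1.2784 + 1 ≤ Real.exp (u - 1.2784) := Real.add_one_le_exp _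
  have h3 : Real.exp 1.2784 * (u - 0.2784) ≤ Real.exp u := by
    rw [h1]
    have : (u - 0.2784 : ℝ) = u - 1.2784 + 1 := by ring
    rw [this]
    exact mul_le_mul_of_nonneg_left h2 (Real.exp_pos _).le
  nlinarith [mul_nonneg hu (by nlinarith : (0:ℝ) ≤ 0.2785 * Real.exp 1.2784 - 1)]

lemma key_tanh (x : ℝ) (hx : 0 ≤ x) : x * (1 - Real.tanh x) ≤ 0.2785 := by
  have hch : 0 < Real.cosh x := Real.cosh_pos x
  have hcosh : Real.cosh x = (Real.exp x + Real.exp (-x)) / 2 := Real.cosh_eq x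
  have hsinh : Real.sinh x = (Real.exp x - Real.exp (-x)) / 2 := Real.sinh_eq x
  have htanh : Real.tanh x = Real.sinh x / Real.cosh x := Real.tanh_eq_sinh_div_cosh x
  have hexp2 : Real.exp (2 * x) = Real.exp x * Real.exp x := by
    rw [← Real.exp_add]; ring_nf
  have hkey := key_u (2 * x) (by linarith)
  have hepos : 0 < Real.exp x := Real.exp_pos x
  have henpos : 0 < Real.exp (-x) := Real.exp_pos _
  have hprod : Real.exp x * Real.exp (-x) = 1 := by
    rw [← Real.exp_add]; simp
  have hcs : Real.cosh x - Real.sinh x = Real.exp (-x) := by rw [hcosh, hsinh]; ring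
  have h1 : x * (1 - Real.tanh x) = x * Real.exp (-x) / Real.cosh x := by
    rw [htanh, one_sub_div (ne_of_gt hch), hcs, mul_div_assoc]
  rw [h1, div_le_iff₀ hch, hcosh]
  nlinarith [mul_pos hepos henpos, hkey, hexp2]

lemma mul_tanh_abs (Θ e : ℝ) : e * Real.tanh (Θ * e) = |e| * Real.tanh (Θ * |e|) := by
  rcases abs_cases e with ⟨h1, _⟩ | ⟨h1, _⟩
  · rw [h1]
  · rw [h1]
    have : Θ * -e = -(Θ * e) := by ring
    rw [this, Real.tanh_neg]
    ring

theorem O_bound (Γ Θ : ℝ) (hΓ : 0 < Γ) (hΘ : 0 < Θ)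
    (Nd Nd' : ℝ → ℝ) (B B' : ℝ)
    (hB : ∀ t : ℝ, |Nd t| ≤ B) (hB' : ∀ t : ℝ, |Nd' t| ≤ B')
    (hΓbound : B + B' ≤ Γ) (e t : ℝ) :
    e * (Nd t - Nd' t) - Γ * e * Real.tanh (Θ * e) ≤
      Γ * |e| * (1 - Real.tanh (Θ * |e|)) ∧
    Γ * |e| * (1 - Real.tanh (Θ * |e|)) ≤ Γ / Θ * 0.2785 := by
  constructor
  · have h1 : e * (Nd t - Nd' t) ≤ Γ * |e| := by
      calc e * (Nd t - Nd' t) ≤ |e * (Nd t - Nd' t)| := le_abs_self _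
        _ = |e| * |Nd t - Nd' t| := abs_mul _ _
        _ ≤ |e| * (B + B') := by
            apply mul_le_mul_of_nonneg_left _ (abs_nonneg e)
            calc |Nd t - Nd' t| ≤ |Nd t| + |Nd' t| := abs_sub _ _
              _ ≤ B + B' := add_le_add (hB t) (hB' t)
        _ ≤ |e| * Γ := mul_le_mul_of_nonneg_left hΓbound (abs_nonneg e)
        _ = Γ * |e| := mul_comm _ _
    have h2 : Γ * e * Real.tanh (Θ * e) = Γ * |e| * Real.tanh (Θ * |e|) := by
      rw [mul_assoc, mul_tanh_abs, mul_assoc]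
    rw [h2]; linarith
  · have hkey := key_tanh (Θ * |e|) (mul_nonneg hΘ.le (abs_nonneg e))
    have hΘne : Θ ≠ 0 := ne_of_gt hΘ
    have h3 : Γ * |e| * (1 - Real.tanh (Θ * |e|))
        = Γ / Θ * (Θ * |e| * (1 - Real.tanh (Θ * |e|))) := by
      field_simp
    rw [h3]
    apply mul_le_mul_of_nonneg_left hkey (div_nonneg hΓ.le hΘ.le)
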